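/- Let f : [0,∞) → ℝ be a càdlàg function (right-continuous with left limits). Let (g_N)_{N≥1} be a sequence of nondecreasing right-continuous functions from [0,∞) to ℝ, and let g : [0,∞) → ℝ be nondecreasing and continuous, such that g_N → g locally uniformly on [0,∞). Then for every T > 0, ∫_{[0,T]} f(t) dμ_{g_N}(t) → ∫_{[0,T]} f(t) dμ_g(t) as N → ∞, where μ_h denotes the Lebesgue–Stieltjes measure induced by a nondecreasing right-continuous function h. -/

import Mathlib

open MeasureTheory Set Filter Function Topology

private lemma partmono {t : ℕ → ℝ} {n : ℕ} (h : ∀ i, i < n → t i < t (i + 1)) :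
    ∀ i j, i ≤ j → j ≤ n → t i ≤ t j := by
  intro i j hij hjn
  induction j, hij using Nat.le_induction with
  | base => exact le_rfl
  | succ j hj ih => exact le_trans (ih (by omega)) (h j (by omega)).le

private lemma exists_cadlag_partition (f : ℝ → ℝ)
    (hf_right : ∀ x : ℝ, 0 ≤ x → ContinuousWithinAt f (Set.Ici x) x)
    (hf_left : ∀ x : ℝ, 0 < x → ∃ l : ℝ, Tendsto f (nhdsWithin x (Set.Iio x)) (nhds l))
    {T : ℝ} (hT : 0 < T) {ε : ℝ} (hε : 0 < ε) :
    ∃ n : ℕ, ∃ t : ℕ → ℝ, t 0 = 0 ∧ t n = T ∧ (∀ i, i < n → t i < t (i + 1)) ∧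
      (∀ i, i < n → ∀ x ∈ Set.Ico (t i) (t (i + 1)), ∀ y ∈ Set.Ico (t i) (t (i + 1)),
        |f x - f y| ≤ ε) := by
  set Good : ℝ → Prop := fun b => ∃ n : ℕ, ∃ t : ℕ → ℝ, t 0 = 0 ∧ t n = b ∧
      (∀ i, i < n → t i < t (i + 1)) ∧
      (∀ i, i < n → ∀ x ∈ Set.Ico (t i) (t (i + 1)), ∀ y ∈ Set.Ico (t i) (t (i + 1)),
        |f x - f y| ≤ ε) with hGoodDef
  have good0 : Good 0 :=
    ⟨0, fun _ => 0, rfl, rfl, fun i hi => absurd hi (Nat.not_lt_zero i),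
      fun i hi => absurd hi (Nat.not_lt_zero i)⟩
  have extend : ∀ b b', Good b → b < b' →
      (∀ x ∈ Set.Ico b b', ∀ y ∈ Set.Ico b b', |f x - f y| ≤ ε) → Good b' := by
    rintro b b' ⟨n, t, ht0, htn, hmono, hosc⟩ hbb' hosc'
    refine ⟨n + 1, fun i => if i ≤ n then t i else b', by simp [ht0], by simp, ?_, ?_⟩
    · intro i hi
      rcases lt_or_eq_of_le (Nat.lt_succ_iff.1 hi) with hi' | hi'
      · simp only [if_pos (Nat.le_of_lt hi'), if_pos (Nat.succ_le_of_lt hi')]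
        exact hmono i hi'
      · subst hi'
        simp only [le_refl, if_pos, Nat.not_succ_le_self, if_neg, htn]
        exact htn ▸ hbb'
    · intro i hi
      rcases lt_or_eq_of_le (Nat.lt_succ_iff.1 hi) with hi' | hi'
      · simpa only [if_pos (Nat.le_of_lt hi'), if_pos (Nat.succ_le_of_lt hi')] using hosc i hi'
      · subst hi'
        simpa only [le_refl, if_pos, Nat.not_succ_le_self, if_neg, htn, if_false] using hosc'
  set A := {b : ℝ | b ∈ Set.Icc 0 T ∧ Good b} with hA
  have h0A : (0 : ℝ) ∈ A := ⟨⟨le_rfl, hT.le⟩, good0⟩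
  have hbdd : BddAbove A := ⟨T, fun b hb => hb.1.2⟩
  have hne : A.Nonempty := ⟨0, h0A⟩
  set c := sSup A with hc
  have hc0 : 0 ≤ c := le_csSup hbdd h0A
  have hcT : c ≤ T := csSup_le hne fun b hb => hb.1.2
  have hcA : c ∈ A := by
    rcases eq_or_lt_of_le hc0 with h | h
    · exact h ▸ h0A
    · obtain ⟨l, hl⟩ := hf_left c h
      have hmem : f ⁻¹' Metric.closedBall l (ε / 2) ∈ 𝓝[<] c :=
        hl (Metric.closedBall_mem_nhds l (by positivity))
      rw [mem_nhdsLT_iff_exists_Ioo_subset] at hmem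
      obtain ⟨a, ha, hsub⟩ := hmem
      have hmax : max a 0 < c := max_lt ha h
      obtain ⟨b, hbA, hab⟩ := exists_lt_of_lt_csSup hne hmax
      have hbc : b ≤ c := le_csSup hbdd hbA
      rcases eq_or_lt_of_le hbc with hbc' | hbc'
      · exact hbc' ▸ hbA
      · refine ⟨⟨hc0, hcT⟩, extend b c hbA.2 hbc' ?_⟩
        intro x hx y hy
        have hx' : f x ∈ Metric.closedBall l (ε / 2) :=
          hsub ⟨lt_of_le_of_lt (le_max_left a 0) (lt_of_lt_of_le hab hx.1), hx.2⟩
        have hy' : f y ∈ Metric.closedBall l (ε / 2) :=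
          hsub ⟨lt_of_le_of_lt (le_max_left a 0) (lt_of_lt_of_le hab hy.1), hy.2⟩
        rw [Metric.mem_closedBall, Real.dist_eq] at hx' hy'
        calc |f x - f y| ≤ |f x - l| + |l - f y| := abs_sub_le _ _ _
          _ ≤ ε / 2 + ε / 2 := add_le_add hx' (by rwa [abs_sub_comm])
          _ = ε := by ring
  rcases eq_or_lt_of_le hcT with hceq | hclt
  · exact hceq ▸ hcA.2
  · exfalso
    have hmem : f ⁻¹' Metric.closedBall (f c) (ε / 2) ∈ 𝓝[≥] c :=
      hf_right c hc0 (Metric.closedBall_mem_nhds _ (by positivity))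
    rw [mem_nhdsGE_iff_exists_Ico_subset] at hmem
    obtain ⟨u, hu, hsub⟩ := hmem
    have hcb' : c < min u T := lt_min hu hclt
    have hb'A : min u T ∈ A := by
      refine ⟨⟨hc0.trans hcb'.le, min_le_right _ _⟩, extend c (min u T) hcA.2 hcb' ?_⟩
      intro x hx y hy
      have hx' : f x ∈ Metric.closedBall (f c) (ε / 2) :=
        hsub ⟨hx.1, lt_of_lt_of_le hx.2 (min_le_left _ _)⟩
      have hy' : f y ∈ Metric.closedBall (f c) (ε / 2) :=
        hsub ⟨hy.1, lt_of_lt_of_le hy.2 (min_le_left _ _)⟩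
      rw [Metric.mem_closedBall, Real.dist_eq] at hx' hy'
      calc |f x - f y| ≤ |f x - f c| + |f c - f y| := abs_sub_le _ _ _
        _ ≤ ε / 2 + ε / 2 := add_le_add hx' (by rwa [abs_sub_comm])
        _ = ε := by ring
    exact absurd (le_csSup hbdd hb'A) (not_le.2 hcb')

private lemma exists_step_function (f : ℝ → ℝ)
    (hf_right : ∀ x : ℝ, 0 ≤ x → ContinuousWithinAt f (Set.Ici x) x)
    (hf_left : ∀ x : ℝ, 0 < x → ∃ l : ℝ, Tendsto f (nhdsWithin x (Set.Iio x)) (nhds l))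
    {T : ℝ} (hT : 0 < T) {ε : ℝ} (hε : 0 < ε) :
    ∃ (n : ℕ) (t : ℕ → ℝ) (s : ℝ → ℝ),
      (∀ i, i ≤ n → t i ∈ Set.Icc 0 T) ∧ (∀ i, i < n → t i ≤ t (i + 1)) ∧
      Measurable s ∧
      (∀ x ∈ Set.Icc 0 T, |f x - s x| ≤ ε) ∧
      (∃ B : ℝ, ∀ x, |s x| ≤ B) ∧
      (∀ μ : Measure ℝ, μ (Set.Icc 0 T) ≠ ⊤ →
        ∫ x in Set.Icc 0 T, s x ∂μ =
          (∑ i ∈ Finset.range n, (μ (Set.Ico (t i) (t (i + 1)))).toReal * f (t i))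
            + (μ {T}).toReal * f T) := by
  obtain ⟨n, t, ht0, htn, hst, hosc⟩ := exists_cadlag_partition f hf_right hf_left hT hε
  have hmono := partmono hst
  have htmem : ∀ i, i ≤ n → t i ∈ Set.Icc 0 T := fun i hi =>
    ⟨ht0 ▸ hmono 0 i (Nat.zero_le i) hi, htn ▸ hmono i n hi le_rfl⟩
  set s : ℝ → ℝ := fun x =>
    (∑ i ∈ Finset.range n,
      Set.indicator (Set.Ico (t i) (t (i + 1))) (fun _ => f (t i)) x)
      + Set.indicator {T} (fun _ => f T) x with hsdef
  have hsmeas : Measurable s := by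
    apply Measurable.add
    · exact Finset.measurable_sum _ fun i _ => measurable_const.indicator measurableSet_Ico
    · exact measurable_const.indicator (measurableSet_singleton T)
  -- locating a point in x < T
  have hfind : ∀ x, 0 ≤ x → x < T → ∃ j, j < n ∧ t j ≤ x ∧ x < t (j + 1) := by
    intro x hx0 hxT
    have hn : 0 < n := by
      rcases Nat.eq_zero_or_pos n with h | h
      · exfalso; rw [h, ht0] at htn; linarith
      · exact h
    set S := (Finset.range (n + 1)).filter (fun i => t i ≤ x) with hS
    have h0S : 0 ∈ S := by
      simp only [hS, Finset.mem_filter, Finset.mem_range]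
      exact ⟨by omega, by rw [ht0]; exact hx0⟩
    have hSne : S.Nonempty := ⟨0, h0S⟩
    set j := S.max' hSne with hj
    have hjS : j ∈ S := Finset.max'_mem _ _
    rw [hS, Finset.mem_filter, Finset.mem_range] at hjS
    have hjn : j < n := by
      rcases Nat.lt_or_ge j n with h | h
      · exact h
      · exfalso
        have : j = n := by omega
        rw [this, htn] at hjS
        linarith [hjS.2]
    have hj1 : ¬ t (j + 1) ≤ x := by
      intro hcon
      have hj1S : j + 1 ∈ S := by
        rw [hS, Finset.mem_filter, Finset.mem_range]
        exact ⟨by omega, hcon⟩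
      have := Finset.le_max' S (j + 1) hj1S
      omega
    exact ⟨j, hjn, hjS.2, not_le.1 hj1⟩
  -- evaluation
  have hseval : ∀ x, x ≠ T → ∀ j, j < n → t j ≤ x → x < t (j + 1) → s x = f (t j) := by
    intro x hxT j hjn hjx hxj
    rw [hsdef]
    simp only
    rw [Set.indicator_of_notMem (by simpa using hxT), add_zero]
    rw [Finset.sum_eq_single j]
    · exact Set.indicator_of_mem (Set.mem_Ico.2 ⟨hjx, hxj⟩) _
    · intro i hi hij
      rw [Finset.mem_range] at hi
      apply Set.indicator_of_notMem
      intro hmem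
      obtain ⟨h1, h2⟩ := hmem
      rcases lt_or_gt_of_ne hij with h | h
      · exact absurd (le_trans (hmono (i + 1) j (by omega) (by omega)) hjx) (not_le.2 h2)
      · exact absurd (le_trans (hmono (j + 1) i (by omega) (by omega)) h1) (not_le.2 hxj)
    · intro h
      exact absurd (Finset.mem_range.2 hjn) h
  have hsT : s T = f T := by
    rw [hsdef]
    simp only
    rw [Set.indicator_of_mem (Set.mem_singleton T)]
    have : ∀ i ∈ Finset.range n,
        Set.indicator (Set.Ico (t i) (t (i + 1))) (fun _ => f (t i)) T = 0 := by
      intro i hi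
      rw [Finset.mem_range] at hi
      apply Set.indicator_of_notMem
      intro hmem
      obtain ⟨-, h2⟩ := hmem
      exact absurd (htn ▸ hmono (i + 1) n (by omega) le_rfl) (not_le.2 h2)
    rw [Finset.sum_congr rfl this, Finset.sum_const_zero, zero_add]
  have happrox : ∀ x ∈ Set.Icc (0 : ℝ) T, |f x - s x| ≤ ε := by
    rintro x ⟨hx0, hxT⟩
    rcases eq_or_lt_of_le hxT with hx | hx
    · rw [hx, hsT, sub_self, abs_zero]; exact hε.le
    · obtain ⟨j, hjn, hjx, hxj⟩ := hfind x hx0 hx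
      rw [hseval x (ne_of_lt hx) j hjn hjx hxj]
      exact hosc j hjn x ⟨hjx, hxj⟩ (t j) ⟨le_rfl, hst j hjn⟩
  have hBnd : ∃ B : ℝ, ∀ x, |s x| ≤ B := by
    refine ⟨(∑ i ∈ Finset.range n, |f (t i)|) + |f T|, fun x => ?_⟩
    rw [hsdef]
    simp only
    calc |(∑ i ∈ Finset.range n,
          Set.indicator (Set.Ico (t i) (t (i + 1))) (fun _ => f (t i)) x)
          + Set.indicator {T} (fun _ => f T) x|
        ≤ |∑ i ∈ Finset.range n,
            Set.indicator (Set.Ico (t i) (t (i + 1))) (fun _ => f (t i)) x|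
          + |Set.indicator {T} (fun _ => f T) x| := abs_add_le _ _
      _ ≤ (∑ i ∈ Finset.range n, |f (t i)|) + |f T| := by
          apply add_le_add
          · refine le_trans (Finset.abs_sum_le_sum_abs _ _) (Finset.sum_le_sum fun i _ => ?_)
            rw [Set.indicator_apply]
            split <;> simp [abs_nonneg]
          · rw [Set.indicator_apply]
            split <;> simp [abs_nonneg]
  refine ⟨n, t, s, htmem, fun i hi => (hst i hi).le, hsmeas, happrox, hBnd, ?_⟩
  intro μ hμ
  have hsubIco : ∀ i, i < n → Set.Ico (t i) (t (i + 1)) ⊆ Set.Icc (0 : ℝ) T := by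
    intro i hi x hx
    exact ⟨le_trans (htmem i hi.le).1 hx.1, le_trans hx.2.le (htmem (i + 1) hi).2⟩
  have hintind : ∀ (A : Set ℝ), MeasurableSet A → A ⊆ Set.Icc (0 : ℝ) T → ∀ c : ℝ,
      Integrable (A.indicator (fun _ => c)) (μ.restrict (Set.Icc 0 T)) := by
    intro A hA hsub c
    rw [integrable_indicator_iff hA]
    refine integrableOn_const (ne_of_lt ?_)
    rw [Measure.restrict_apply hA]
    exact lt_of_le_of_lt (measure_mono Set.inter_subset_right) hμ.lt_top
  have hindint : ∀ (A : Set ℝ), MeasurableSet A → A ⊆ Set.Icc (0 : ℝ) T → ∀ c : ℝ,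
      ∫ x in Set.Icc (0 : ℝ) T, A.indicator (fun _ => c) x ∂μ = (μ A).toReal * c := by
    intro A hA hsub c
    rw [setIntegral_indicator hA, Set.inter_eq_self_of_subset_right hsub, setIntegral_const,
      smul_eq_mul, measureReal_def]
  rw [hsdef]
  simp only
  rw [integral_add (integrable_finset_sum _ fun i hi =>
        hintind _ measurableSet_Ico (hsubIco i (Finset.mem_range.1 hi)) _)
      (hintind _ (measurableSet_singleton T) (by simp [hT.le]) _),
    integral_finset_sum _ fun i hi =>
        hintind _ measurableSet_Ico (hsubIco i (Finset.mem_range.1 hi)) _]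
  congr 1
  · exact Finset.sum_congr rfl fun i hi =>
      hindint _ measurableSet_Ico (hsubIco i (Finset.mem_range.1 hi)) _
  · exact hindint _ (measurableSet_singleton T) (by simp [hT.le]) _

private lemma cadlag_meas_bound (f : ℝ → ℝ)
    (hf_right : ∀ x : ℝ, 0 ≤ x → ContinuousWithinAt f (Set.Ici x) x)
    (hf_left : ∀ x : ℝ, 0 < x → ∃ l : ℝ, Tendsto f (nhdsWithin x (Set.Iio x)) (nhds l))
    {T : ℝ} (hT : 0 < T) :
    Measurable ((Set.Icc (0 : ℝ) T).indicator f) ∧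
      ∃ C : ℝ, ∀ x ∈ Set.Icc (0 : ℝ) T, |f x| ≤ C := by
  constructor
  · have H : ∀ k : ℕ, ∃ s : ℝ → ℝ, Measurable s ∧
        ∀ x ∈ Set.Icc (0 : ℝ) T, |f x - s x| ≤ 1 / (k + 1) := by
      intro k
      obtain ⟨n, t, s, -, -, hmeas, happrox, -, -⟩ :=
        exists_step_function f hf_right hf_left hT (ε := 1 / (k + 1)) (by positivity)
      exact ⟨s, hmeas, happrox⟩
    choose sk hmeas happrox using H
    apply measurable_of_tendsto_metrizable
      (f := fun k => (Set.Icc (0 : ℝ) T).indicator (sk k))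
    · exact fun k => (hmeas k).indicator measurableSet_Icc
    · rw [tendsto_pi_nhds]
      intro x
      by_cases hx : x ∈ Set.Icc (0 : ℝ) T
      · simp only [Set.indicator_of_mem hx]
        rw [tendsto_iff_dist_tendsto_zero]
        apply squeeze_zero (fun k => dist_nonneg)
          (g := fun k : ℕ => 1 / ((k : ℝ) + 1))
        · intro k
          rw [Real.dist_eq, abs_sub_comm]
          exact happrox k x hx
        · exact tendsto_one_div_add_atTop_nhds_zero_nat
      · simp only [Set.indicator_of_notMem hx]
        exact tendsto_const_nhds
  · obtain ⟨n, t, s, -, -, -, happrox, ⟨B, hB⟩, -⟩ :=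
      exists_step_function f hf_right hf_left hT (ε := 1) one_pos
    refine ⟨1 + B, fun x hx => ?_⟩
    calc |f x| = |f x - s x + s x| := by ring_nf
      _ ≤ |f x - s x| + |s x| := abs_add_le _ _
      _ ≤ 1 + B := add_le_add (happrox x hx) (hB x)

/-- **Lemma 5.2.** If `f` is càdlàg on `[0,∞)`, `gN` is a sequence of nondecreasing
right-continuous functions on `[0,∞)` (encoded as Stieltjes functions on `ℝ` that are
constant on `(-∞,0]`), `g` is nondecreasing and continuous, and `gN → g` locally uniformly
on `[0,∞)`, then `∫_{[0,T]} f dμ_{gN} → ∫_{[0,T]} f dμ_g` for every `T > 0`, where `μ_h`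
is the Lebesgue–Stieltjes measure of `h`. -/
theorem stieltjes_integral_tendsto_of_tendstoUniformly
    (f : ℝ → ℝ)
    (hf_right : ∀ x : ℝ, 0 ≤ x → ContinuousWithinAt f (Set.Ici x) x)
    (hf_left : ∀ x : ℝ, 0 < x → ∃ l : ℝ, Tendsto f (nhdsWithin x (Set.Iio x)) (nhds l))
    (gN : ℕ → StieltjesFunction ℝ) (g : StieltjesFunction ℝ)
    (hgN_const : ∀ N : ℕ, ∀ x : ℝ, x ≤ 0 → gN N x = gN N 0)
    (hg_const : ∀ x : ℝ, x ≤ 0 → g x = g 0)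
    (hg_cont : Continuous g)
    (hconv : ∀ T : ℝ, 0 < T →
      TendstoUniformlyOn (fun N x => gN N x) g atTop (Set.Icc 0 T)) :
    ∀ T : ℝ, 0 < T →
      Tendsto (fun N => ∫ t in Set.Icc (0:ℝ) T, f t ∂(gN N).measure) atTop
        (nhds (∫ t in Set.Icc (0:ℝ) T, f t ∂g.measure)) := by
  intro T hT
  obtain ⟨hFmeas, C, hC⟩ := cadlag_meas_bound f hf_right hf_left hT
  have hfin : ∀ h : StieltjesFunction ℝ, h.measure (Set.Icc 0 T) ≠ ⊤ := fun h => by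
    rw [h.measure_Icc]; exact ENNReal.ofReal_ne_top
  have hintf : ∀ h : StieltjesFunction ℝ, IntegrableOn f (Set.Icc 0 T) h.measure := by
    intro h
    have haesm : AEStronglyMeasurable f (h.measure.restrict (Set.Icc 0 T)) := by
      apply (hFmeas.stronglyMeasurable.aestronglyMeasurable).congr
      filter_upwards [ae_restrict_mem measurableSet_Icc] with x hx
      exact Set.indicator_of_mem hx f
    refine ⟨haesm, HasFiniteIntegral.restrict_of_bounded (C := C) (hfin h).lt_top ?_⟩
    filter_upwards [ae_restrict_mem measurableSet_Icc] with x hx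
    simpa [Real.norm_eq_abs] using hC x hx
  -- pointwise convergence
  have hptwise : ∀ b ∈ Set.Icc (0 : ℝ) T, Tendsto (fun N => gN N b) atTop (𝓝 (g b)) :=
    fun b hb => (hconv T hT).tendsto_at hb
  -- left limits at 0
  have hll0 : ∀ N, leftLim (gN N) 0 = gN N 0 := by
    intro N
    apply leftLim_eq_of_tendsto
    apply Tendsto.congr' _ tendsto_const_nhds
    filter_upwards [self_mem_nhdsWithin] with y hy
    exact (hgN_const N y (le_of_lt hy)).symm
  have hllg : ∀ b : ℝ, leftLim g b = g b := by
    intro b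
    apply leftLim_eq_of_tendsto
    exact (hg_cont.tendsto b).mono_left nhdsWithin_le_nhds
  -- uniform bound on left limits
  have key : ∀ δ : ℝ, 0 < δ → ∀ᶠ N in atTop,
      ∀ b ∈ Set.Icc (0 : ℝ) T, |leftLim (gN N) b - g b| ≤ δ := by
    intro δ hδ
    filter_upwards [(Metric.tendstoUniformlyOn_iff.1 (hconv T hT)) δ hδ] with N hN
    intro b hb
    have hub : ∀ x ∈ Set.Icc (0 : ℝ) T, |g x - gN N x| ≤ δ := fun x hx =>
      le_of_lt (by simpa [Real.dist_eq] using hN x hx)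
    have h1 : leftLim (gN N) b ≤ g b + δ := by
      have h1' := (gN N).mono.leftLim_le (le_refl b)
      have h2' := abs_le.1 (hub b hb)
      linarith [h2'.1]
    have h2 : g b - δ ≤ leftLim (gN N) b := by
      rcases eq_or_lt_of_le hb.1 with hb0 | hb0
      · rw [← hb0, hll0 N]
        have := abs_le.1 (hub 0 ⟨le_rfl, hT.le⟩)
        linarith [this.2]
      · have hgy : Tendsto (fun y => g y - δ) (𝓝[<] b) (𝓝 (g b - δ)) :=
          ((hg_cont.tendsto b).mono_left nhdsWithin_le_nhds).sub_const δ
        apply le_of_tendsto hgy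
        filter_upwards [Ioo_mem_nhdsLT_of_mem (⟨hb0, le_rfl⟩ : b ∈ Set.Ioc 0 b)] with y hy
        have hle : gN N y ≤ leftLim (gN N) b := (gN N).mono.le_leftLim hy.2
        have := abs_le.1 (hub y ⟨hy.1.le, hy.2.le.trans hb.2⟩)
        linarith [this.2]
    exact abs_le.2 ⟨by linarith, by linarith⟩
  have hLL : ∀ b ∈ Set.Icc (0 : ℝ) T,
      Tendsto (fun N => leftLim (gN N) b) atTop (𝓝 (g b)) := by
    intro b hb
    rw [Metric.tendsto_nhds]
    intro δ hδ
    filter_upwards [key (δ / 2) (half_pos hδ)] with N hN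
    rw [Real.dist_eq]
    linarith [hN b hb]
  -- masses
  have hmassN : ∀ N, ((gN N).measure (Set.Icc 0 T)).toReal = gN N T - gN N 0 := by
    intro N
    rw [StieltjesFunction.measure_Icc, hll0 N,
      ENNReal.toReal_ofReal (sub_nonneg.2 ((gN N).mono hT.le))]
  have hmassg : (g.measure (Set.Icc 0 T)).toReal = g T - g 0 := by
    rw [StieltjesFunction.measure_Icc, hllg 0,
      ENNReal.toReal_ofReal (sub_nonneg.2 (g.mono hT.le))]
  set M := g T - g 0 + 1 with hMdef
  have hM : 0 < M := by
    have := g.mono hT.le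
    rw [hMdef]; linarith
  have hmassN_ev : ∀ᶠ N in atTop, ((gN N).measure (Set.Icc 0 T)).toReal ≤ M := by
    have h1 : Tendsto (fun N => gN N T - gN N 0) atTop (𝓝 (g T - g 0)) :=
      (hptwise T ⟨hT.le, le_rfl⟩).sub (hptwise 0 ⟨le_rfl, hT.le⟩)
    filter_upwards [h1.eventually (eventually_le_nhds (lt_add_one _))] with N hN
    rw [hmassN N]; exact hN
  rw [Metric.tendsto_nhds]
  intro ε' hε'
  set ε := ε' / (4 * M) with hεdef
  have hε : 0 < ε := by positivity
  obtain ⟨n, t, s, htmem, htle, hsmeas, happrox, ⟨B, hB⟩, hsint⟩ :=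
    exists_step_function f hf_right hf_left hT hε
  have hints : ∀ h : StieltjesFunction ℝ, IntegrableOn s (Set.Icc 0 T) h.measure := by
    intro h
    refine ⟨hsmeas.aestronglyMeasurable.restrict,
      HasFiniteIntegral.restrict_of_bounded (C := B) (hfin h).lt_top ?_⟩
    exact Eventually.of_forall fun x => by simpa [Real.norm_eq_abs] using hB x
  have herr : ∀ h : StieltjesFunction ℝ,
      |(∫ x in Set.Icc (0:ℝ) T, f x ∂h.measure) - ∫ x in Set.Icc (0:ℝ) T, s x ∂h.measure|
        ≤ ε * (h.measure (Set.Icc 0 T)).toReal := by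
    intro h
    rw [← integral_sub (hintf h) (hints h)]
    have := norm_setIntegral_le_of_norm_le_const (μ := h.measure) (C := ε)
      (f := fun x => f x - s x) (hfin h).lt_top
      (fun x hx => by simpa [Real.norm_eq_abs] using happrox x hx)
    simpa [Real.norm_eq_abs, measureReal_def] using this
  -- step integrals formulas and convergence
  have hIg : ∫ x in Set.Icc (0:ℝ) T, s x ∂g.measure
      = ∑ i ∈ Finset.range n, (g (t (i + 1)) - g (t i)) * f (t i) := by
    rw [hsint g.measure (hfin g)]
    have h1 : (g.measure {T}).toReal = 0 := by
      simp [StieltjesFunction.measure_singleton, hllg T]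
    rw [h1, zero_mul, add_zero]
    refine Finset.sum_congr rfl fun i hi => ?_
    rw [StieltjesFunction.measure_Ico, hllg, hllg,
      ENNReal.toReal_ofReal (sub_nonneg.2 (g.mono (htle i (Finset.mem_range.1 hi))))]
  have hIN : Tendsto (fun N => ∫ x in Set.Icc (0:ℝ) T, s x ∂(gN N).measure) atTop
      (𝓝 (∫ x in Set.Icc (0:ℝ) T, s x ∂g.measure)) := by
    rw [hIg]
    have heq : (fun N => ∫ x in Set.Icc (0:ℝ) T, s x ∂(gN N).measure)
        = fun N => (∑ i ∈ Finset.range n,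
            ((gN N).measure (Set.Ico (t i) (t (i + 1)))).toReal * f (t i))
          + ((gN N).measure {T}).toReal * f T := funext fun N => hsint _ (hfin _)
    rw [heq]
    have hterm : ∀ i ∈ Finset.range n,
        Tendsto (fun N => ((gN N).measure (Set.Ico (t i) (t (i + 1)))).toReal * f (t i)) atTop
          (𝓝 ((g (t (i + 1)) - g (t i)) * f (t i))) := by
      intro i hi
      have hi' := Finset.mem_range.1 hi
      have hform : ∀ N, ((gN N).measure (Set.Ico (t i) (t (i + 1)))).toReal
          = leftLim (gN N) (t (i + 1)) - leftLim (gN N) (t i) := by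
        intro N
        rw [StieltjesFunction.measure_Ico,
          ENNReal.toReal_ofReal (sub_nonneg.2 ((gN N).mono.leftLim (htle i hi')))]
      have t1 : Tendsto (fun N => (leftLim (gN N) (t (i + 1)) - leftLim (gN N) (t i)) * f (t i))
          atTop (𝓝 ((g (t (i + 1)) - g (t i)) * f (t i))) :=
        (Tendsto.sub (hLL _ (htmem (i + 1) hi')) (hLL _ (htmem i hi'.le))).mul_const _
      exact t1.congr fun N => by rw [hform N]
    have hsing : Tendsto (fun N => ((gN N).measure {T}).toReal * f T) atTop (𝓝 0) := by
      have hform : ∀ N, ((gN N).measure {T}).toReal = gN N T - leftLim (gN N) T := by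
        intro N
        rw [StieltjesFunction.measure_singleton,
          ENNReal.toReal_ofReal (sub_nonneg.2 ((gN N).mono.leftLim_le (le_refl T)))]
      have t1 : Tendsto (fun N => (gN N T - leftLim (gN N) T) * f T) atTop
          (𝓝 ((g T - g T) * f T)) :=
        (Tendsto.sub (hptwise T ⟨hT.le, le_rfl⟩) (hLL T ⟨hT.le, le_rfl⟩)).mul_const _
      have : Tendsto (fun N => ((gN N).measure {T}).toReal * f T) atTop (𝓝 ((g T - g T) * f T)) :=
        t1.congr fun N => by rw [hform N]
      simpa using this
    have := (tendsto_finset_sum (Finset.range n) hterm).add hsing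
    simpa using this
  have hIN' : ∀ᶠ N in atTop,
      dist (∫ x in Set.Icc (0:ℝ) T, s x ∂(gN N).measure)
        (∫ x in Set.Icc (0:ℝ) T, s x ∂g.measure) < ε' / 4 :=
    Metric.tendsto_nhds.1 hIN (ε' / 4) (by positivity)
  have hεM : ε * M ≤ ε' / 4 := by
    have heq : ε * M = ε' / 4 := by
      rw [hεdef]
      field_simp
    exact le_of_eq heq
  filter_upwards [hIN', hmassN_ev] with N h1 h2
  rw [Real.dist_eq]
  have e1 := herr (gN N)
  have e2 := herr g
  have hb1 : ε * ((gN N).measure (Set.Icc 0 T)).toReal ≤ ε' / 4 :=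
    le_trans (mul_le_mul_of_nonneg_left h2 hε.le) hεM
  have hb2 : ε * (g.measure (Set.Icc 0 T)).toReal ≤ ε' / 4 := by
    refine le_trans (mul_le_mul_of_nonneg_left ?_ hε.le) hεM
    rw [hmassg, hMdef]; linarith
  rw [Real.dist_eq] at h1
  set a1 := ∫ x in Set.Icc (0:ℝ) T, f x ∂(gN N).measure
  set a2 := ∫ x in Set.Icc (0:ℝ) T, s x ∂(gN N).measure
  set a3 := ∫ x in Set.Icc (0:ℝ) T, s x ∂g.measure
  set a4 := ∫ x in Set.Icc (0:ℝ) T, f x ∂g.measure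
  have habs : |a1 - a4| ≤ |a1 - a2| + |a2 - a3| + |a3 - a4| := by
    calc |a1 - a4| ≤ |a1 - a3| + |a3 - a4| := abs_sub_le _ _ _
      _ ≤ (|a1 - a2| + |a2 - a3|) + |a3 - a4| := by
          have := abs_sub_le a1 a2 a3
          linarith
  have h34 : |a3 - a4| ≤ ε' / 4 := by
    rw [abs_sub_comm]
    exact le_trans e2 hb2
  have h12 : |a1 - a2| ≤ ε' / 4 := le_trans e1 hb1
  linarith [habs, h12, h1, h34]
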